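/- Let G be a finite group and let μ ∈ P(G) satisfy μ(g) > 0 for every g ∈ G. Then as t → 1⁻, Q_t(μ) converges to the uniform probability measure (1/|G|) Σ_{g∈G} δ_g; equivalently, the ω-limit set of the orbit of μ under Q_t is the single point (1/|G|) Σ_{g∈G} δ_g, the main attractor of the rational semigroup. -/

import Mathlib

open Filter

set_option linter.unusedSectionVars false

namespace QtAux
open Finset
variable {G : Type*} [CommGroup G] [Fintype G]

lemma mul_apply' (a b : MonoidAlgebra ℝ G) (x : G) :
    (a * b).coeff x = ∑ y : G, a.coeff y * b.coeff (y⁻¹ * x) := by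
  classical
  rw [MonoidAlgebra.mul_apply]
  rw [Finsupp.sum_fintype _ _ (by intro; simp)]
  refine Finset.sum_congr rfl fun y _ => ?_
  rw [Finsupp.sum_fintype _ _ (by intro; simp)]
  rw [Finset.sum_eq_single (y⁻¹ * x)]
  · simp
  · intro z _ hz
    rw [if_neg]
    intro h; exact hz (by rw [← h]; group)
  · simp

noncomputable def N (a : MonoidAlgebra ℝ G) : ℝ := ∑ g : G, |a.coeff g|

lemma N_nonneg (a : MonoidAlgebra ℝ G) : 0 ≤ N a :=
  Finset.sum_nonneg fun _ _ => abs_nonneg _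

lemma abs_apply_le (a : MonoidAlgebra ℝ G) (x : G) : |a.coeff x| ≤ N a :=
  Finset.single_le_sum (f := fun g => |a.coeff g|) (fun _ _ => abs_nonneg _) (Finset.mem_univ x)

lemma eq_zero_of_N (a : MonoidAlgebra ℝ G) (h : N a = 0) : a = 0 := by
  ext g
  have := (Finset.sum_eq_zero_iff_of_nonneg (fun _ _ => abs_nonneg (a.coeff _))).1 h g (mem_univ g)
  simpa using this

lemma N_smul (t : ℝ) (a : MonoidAlgebra ℝ G) : N (t • a) = |t| * N a := by
  have h : ∀ g : G, (t • a).coeff g = t * a.coeff g := fun g => rfl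
  simp [N, Finset.mul_sum, abs_mul, h]

lemma N_add_le (a b : MonoidAlgebra ℝ G) : N (a + b) ≤ N a + N b := by
  simp only [N]
  rw [← Finset.sum_add_distrib]
  exact Finset.sum_le_sum fun g _ => by simpa using abs_add_le (a.coeff g) (b.coeff g)

lemma shift_sum (b : MonoidAlgebra ℝ G) (f : ℝ → ℝ) (y : G) :
    ∑ x : G, f (b.coeff (y⁻¹ * x)) = ∑ x : G, f (b.coeff x) :=
  Fintype.sum_equiv (Equiv.mulLeft y⁻¹) _ _ (fun _ => rfl)

lemma N_mul_le (a b : MonoidAlgebra ℝ G) : N (a * b) ≤ N a * N b := by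
  calc N (a * b) = ∑ x : G, |∑ y : G, a.coeff y * b.coeff (y⁻¹ * x)| := by
        simp only [N, mul_apply']
    _ ≤ ∑ x : G, ∑ y : G, |a.coeff y| * |b.coeff (y⁻¹ * x)| := by
        refine Finset.sum_le_sum fun x _ => ?_
        exact (Finset.abs_sum_le_sum_abs _ _).trans (le_of_eq (by simp [abs_mul]))
    _ = ∑ y : G, |a.coeff y| * ∑ x : G, |b.coeff (y⁻¹ * x)| := by
        rw [Finset.sum_comm]; simp [Finset.mul_sum]
    _ = N a * N b := by
        rw [N, Finset.sum_mul]
        refine Finset.sum_congr rfl fun y _ => ?_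
        rw [shift_sum b (fun r => |r|) y]; rfl

/-- key contraction inequality -/
lemma N_key (μ a : MonoidAlgebra ℝ G) (m : ℝ) (hm : ∀ g, m ≤ μ.coeff g)
    (hmass : ∑ g : G, a.coeff g = 0) :
    N (μ * a) ≤ ((∑ g : G, μ.coeff g) - (Fintype.card G : ℝ) * m) * N a := by
  have h1 : ∀ x : G, (μ * a).coeff x = ∑ y : G, (μ.coeff y - m) * a.coeff (y⁻¹ * x) := by
    intro x
    rw [mul_apply']
    have h0 : ∑ y : G, m * a.coeff (y⁻¹ * x) = 0 := by
      rw [← Finset.mul_sum,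
        show (∑ y : G, a.coeff (y⁻¹ * x)) = ∑ y : G, a.coeff y from
          Fintype.sum_equiv ((Equiv.inv G).trans (Equiv.mulRight x)) _ _ (fun _ => rfl),
        hmass, mul_zero]
    rw [← sub_zero (∑ y : G, μ.coeff y * a.coeff (y⁻¹ * x)), ← h0, ← Finset.sum_sub_distrib]
    exact Finset.sum_congr rfl fun y _ => by ring
  calc N (μ * a) = ∑ x : G, |∑ y : G, (μ.coeff y - m) * a.coeff (y⁻¹ * x)| := by
        simp only [N, h1]
    _ ≤ ∑ x : G, ∑ y : G, (μ.coeff y - m) * |a.coeff (y⁻¹ * x)| := by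
        refine Finset.sum_le_sum fun x _ => ?_
        refine (Finset.abs_sum_le_sum_abs _ _).trans (le_of_eq ?_)
        refine Finset.sum_congr rfl fun y _ => ?_
        rw [abs_mul, abs_of_nonneg (by linarith [hm y])]
    _ = ∑ y : G, (μ.coeff y - m) * ∑ x : G, |a.coeff (y⁻¹ * x)| := by
        rw [Finset.sum_comm]; simp [Finset.mul_sum]
    _ = ((∑ g : G, μ.coeff g) - (Fintype.card G : ℝ) * m) * N a := by
        have hN : ∀ y : G, ∑ x : G, |a.coeff (y⁻¹ * x)| = N a := fun y => shift_sum a (fun r => |r|) y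
        simp only [hN]
        rw [← Finset.sum_mul, Finset.sum_sub_distrib]
        simp [mul_comm]

noncomputable def eps : MonoidAlgebra ℝ G →ₐ[ℝ] ℝ := MonoidAlgebra.lift ℝ ℝ G 1

lemma eps_eq (a : MonoidAlgebra ℝ G) : eps a = ∑ g : G, a.coeff g := by
  rw [eps, MonoidAlgebra.lift_apply, Finsupp.sum_fintype _ _ (by intro; simp)]
  simp

noncomputable def u : MonoidAlgebra ℝ G :=
  MonoidAlgebra.ofCoeff (Finsupp.equivFunOnFinite.symm (fun _ => (Fintype.card G : ℝ)⁻¹))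

lemma u_apply (g : G) : (u : MonoidAlgebra ℝ G).coeff g = (Fintype.card G : ℝ)⁻¹ := by
  simp [u]

lemma mul_u (a : MonoidAlgebra ℝ G) : a * u = (∑ g : G, a.coeff g) • u := by
  ext x
  rw [mul_apply']
  have h : ∀ g : G, ((∑ g : G, a.coeff g) • (u : MonoidAlgebra ℝ G)).coeff g = (∑ g : G, a.coeff g) * u.coeff g :=
    fun g => rfl
  rw [h]
  simp only [u_apply, ← Finset.sum_mul]

lemma isUnit_aux (μ : MonoidAlgebra ℝ G) (t : ℝ) (ht0 : 0 ≤ t) (ht1 : t < 1)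
    (hN : N μ ≤ 1) : IsUnit (1 - t • μ) := by
  have : FiniteDimensional ℝ (MonoidAlgebra ℝ G) :=
    Module.Finite.equiv ((MonoidAlgebra.coeffLinearEquiv ℝ).trans (Finsupp.linearEquivFunOnFinite ℝ ℝ G)).symm
  set v : MonoidAlgebra ℝ G := 1 - t • μ with hv
  have hker : ∀ a : MonoidAlgebra ℝ G, v * a = 0 → a = 0 := by
    intro a ha
    have ha' : a = t • (μ * a) := by
      have h0 : a - t • (μ * a) = 0 := by
        rw [← ha, hv]; rw [sub_mul, one_mul, smul_mul_assoc]
      rw [sub_eq_zero] at h0; exact h0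
    have h1 : N a ≤ t * N a := by
      calc N a = |t| * N (μ * a) := by nth_rewrite 1 [ha']; rw [N_smul]
        _ ≤ t * (N μ * N a) := by
            rw [abs_of_nonneg ht0]
            exact mul_le_mul_of_nonneg_left (N_mul_le μ a) ht0
        _ ≤ t * (1 * N a) := by
            refine mul_le_mul_of_nonneg_left ?_ ht0
            exact mul_le_mul_of_nonneg_right hN (N_nonneg a)
        _ = t * N a := by ring
    have h2 : N a = 0 := by nlinarith [N_nonneg a]
    exact eq_zero_of_N a h2
  have hinj : Function.Injective (LinearMap.mulLeft ℝ v) := by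
    intro a b h
    have h3 : v * (a - b) = 0 := by
      rw [mul_sub, sub_eq_zero]
      exact h
    have := hker _ h3
    rwa [sub_eq_zero] at this
  have hsurj := (LinearMap.injective_iff_surjective).1 hinj
  obtain ⟨b, hb⟩ := hsurj 1
  exact IsUnit.of_mul_eq_one b hb

end QtAux

/-- The rational map `Q_t(μ) = (1-t) μ (1 - tμ)⁻¹` in the group algebra `ℝ[G]`. -/
noncomputable def Q {G : Type*} [CommGroup G] (t : ℝ) (μ : MonoidAlgebra ℝ G) :
    MonoidAlgebra ℝ G :=
  (1 - t) • (μ * Ring.inverse (1 - t • μ))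

open Finset in
/-- Let `G` be a finite (abelian) group and `μ ∈ P(G)` with `μ(g) > 0` for
every `g`. Then, as `t → 1⁻`, `Q_t(μ)` converges (coefficientwise, which is convergence in the
finite-dimensional space `ℝ[G]`) to the uniform probability measure `(1/|G|) Σ_g δ_g`, the
main attractor of the rational semigroup. -/
theorem Qt_tendsto_uniform {G : Type*} [CommGroup G] [Fintype G]
    (μ : MonoidAlgebra ℝ G) (hpos : ∀ g : G, 0 < μ.coeff g) (hsum : ∑ g : G, μ.coeff g = 1) :
    ∀ x : G, Tendsto (fun t : ℝ => (Q t μ).coeff x) (nhdsWithin 1 (Set.Iio 1))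
      (nhds ((Fintype.card G : ℝ)⁻¹)) := by
  intro x
  have hGne : (univ : Finset G).Nonempty := univ_nonempty
  have hcard : (0:ℝ) < Fintype.card G := by exact_mod_cast Fintype.card_pos
  set m : ℝ := univ.inf' hGne (fun g => μ.coeff g) with hm_def
  obtain ⟨g₀, -, hg₀⟩ := Finset.exists_mem_eq_inf' hGne (fun g => μ.coeff g)
  have hm_pos : 0 < m := by rw [hm_def, hg₀]; exact hpos g₀
  have hm_le : ∀ g : G, m ≤ μ.coeff g := fun g => Finset.inf'_le _ (mem_univ g)
  have hNμ : QtAux.N μ = 1 := by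
    rw [QtAux.N, ← hsum]
    exact Finset.sum_congr rfl fun g _ => abs_of_pos (hpos g)
  set q : ℝ := 1 - (Fintype.card G : ℝ) * m with hq_def
  have hcm : 0 < (Fintype.card G : ℝ) * m := by positivity
  have hq0 : 0 ≤ q := by
    have h1 : (Fintype.card G : ℝ) * m = ∑ _g : G, m := by
      simp [Finset.sum_const, nsmul_eq_mul]
    have h2 : ∑ _g : G, m ≤ ∑ g : G, μ.coeff g := Finset.sum_le_sum fun g _ => hm_le g
    rw [hsum] at h2
    rw [hq_def]
    linarith [h1 ▸ h2]
  set ν : MonoidAlgebra ℝ G := μ - QtAux.u with hν_def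
  have hmassu : ∑ g : G, (QtAux.u : MonoidAlgebra ℝ G).coeff g = 1 := by
    rw [Finset.sum_congr rfl fun g _ => QtAux.u_apply g]
    rw [Finset.sum_const, nsmul_eq_mul]
    simp
  have hmassν : ∑ g : G, ν.coeff g = 0 := by
    have h : ∀ g : G, ν.coeff g = μ.coeff g - QtAux.u.coeff g := fun g => rfl
    rw [Finset.sum_congr rfl fun g _ => h g, Finset.sum_sub_distrib, hsum, hmassu, sub_self]
  set C : ℝ := QtAux.N ν / ((Fintype.card G : ℝ) * m) with hC_def
  have hC0 : 0 ≤ C := div_nonneg (QtAux.N_nonneg ν) hcm.le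
  have key : ∀ t : ℝ, t ∈ Set.Ioo (0:ℝ) 1 →
      |(Q t μ).coeff x - (Fintype.card G : ℝ)⁻¹| ≤ (1 - t) * C := by
    intro t ht
    obtain ⟨ht0, ht1⟩ := ht
    have hunit := QtAux.isUnit_aux μ t ht0.le ht1 hNμ.le
    set w : MonoidAlgebra ℝ G := Ring.inverse (1 - t • μ) with hw_def
    have hw : (1 - t • μ) * w = 1 := Ring.mul_inverse_cancel _ hunit
    have hμu : μ * QtAux.u = QtAux.u := by rw [QtAux.mul_u, hsum, one_smul]
    have h1 : (1 - t • μ) * QtAux.u = (1 - t) • QtAux.u := by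
      rw [sub_mul, one_mul, smul_mul_assoc, hμu, sub_smul, one_smul]
    have h2 : QtAux.u = (1 - t) • ((QtAux.u : MonoidAlgebra ℝ G) * w) := by
      calc (QtAux.u : MonoidAlgebra ℝ G) = QtAux.u * ((1 - t • μ) * w) := by rw [hw, mul_one]
        _ = ((1 - t • μ) * QtAux.u) * w := by ring
        _ = ((1 - t) • (QtAux.u : MonoidAlgebra ℝ G)) * w := by rw [h1]
        _ = (1 - t) • ((QtAux.u : MonoidAlgebra ℝ G) * w) := smul_mul_assoc _ _ _
    set z : MonoidAlgebra ℝ G := ν * w with hz_def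
    have hz_eq : z = ν + t • (μ * z) := by
      have h3 : z - t • (μ * z) = ν := by
        have h3a : z - t • (μ * z) = (1 - t • μ) * z := by
          rw [sub_mul, one_mul, smul_mul_assoc]
        rw [h3a, hz_def, mul_left_comm, hw, mul_one]
      rw [← h3]; abel
    have hmassz : ∑ g : G, z.coeff g = 0 := by
      have h4 := map_mul QtAux.eps ν w
      rw [← hz_def, QtAux.eps_eq, QtAux.eps_eq, QtAux.eps_eq, hmassν, zero_mul] at h4
      exact h4
    have hNz : QtAux.N z ≤ C := by
      have h5 : QtAux.N (μ * z) ≤ q * QtAux.N z := by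
        have h := QtAux.N_key μ z m hm_le hmassz
        rw [hsum] at h
        rw [hq_def]
        exact h
      have h6 : QtAux.N z ≤ QtAux.N ν + t * (q * QtAux.N z) := by
        calc QtAux.N z = QtAux.N (ν + t • (μ * z)) := by rw [← hz_eq]
          _ ≤ QtAux.N ν + QtAux.N (t • (μ * z)) := QtAux.N_add_le _ _
          _ = QtAux.N ν + t * QtAux.N (μ * z) := by rw [QtAux.N_smul, abs_of_pos ht0]
          _ ≤ QtAux.N ν + t * (q * QtAux.N z) := by
              have := mul_le_mul_of_nonneg_left h5 ht0.le
              linarith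
      rw [hC_def, le_div_iff₀ hcm]
      have htq : t * q ≤ q := by nlinarith
      nlinarith [QtAux.N_nonneg z]
    have h7 : Q t μ = QtAux.u + (1 - t) • z := by
      calc Q t μ = (1 - t) • (μ * w) := by rw [Q, ← hw_def]
        _ = (1 - t) • (((QtAux.u : MonoidAlgebra ℝ G) + (μ - QtAux.u)) * w) := by
            rw [add_sub_cancel]
        _ = (1 - t) • ((QtAux.u : MonoidAlgebra ℝ G) * w) + (1 - t) • ((μ - QtAux.u) * w) := by
            rw [add_mul, smul_add]
        _ = QtAux.u + (1 - t) • z := by rw [← h2, hz_def, hν_def]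
    have h8 : (Q t μ).coeff x - (Fintype.card G : ℝ)⁻¹ = (1 - t) * z.coeff x := by
      have h9 : (Q t μ).coeff x = ((QtAux.u : MonoidAlgebra ℝ G) + (1 - t) • z).coeff x := by rw [h7]
      have h10 : ((QtAux.u : MonoidAlgebra ℝ G) + (1 - t) • z).coeff x
          = QtAux.u.coeff x + (1 - t) * z.coeff x := rfl
      rw [h9, h10, QtAux.u_apply]
      ring
    rw [h8, abs_mul, abs_of_nonneg (by linarith : (0:ℝ) ≤ 1 - t)]
    exact mul_le_mul_of_nonneg_left ((QtAux.abs_apply_le z x).trans hNz) (by linarith)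
  have hg0 : Tendsto (fun t : ℝ => (1 - t) * C) (nhdsWithin 1 (Set.Iio 1)) (nhds 0) := by
    have h : Tendsto (fun t : ℝ => (1 - t) * C) (nhds 1) (nhds ((1 - 1) * C)) :=
      Continuous.tendsto (by continuity) 1
    rw [sub_self, zero_mul] at h
    exact h.mono_left nhdsWithin_le_nhds
  have hev : ∀ᶠ t in nhdsWithin (1:ℝ) (Set.Iio 1),
      ‖(Q t μ).coeff x - (Fintype.card G : ℝ)⁻¹‖ ≤ (1 - t) * C := by
    filter_upwards [Ioo_mem_nhdsLT_of_mem (Set.mem_Ioc.mpr ⟨zero_lt_one, le_refl 1⟩)] with t ht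
    rw [Real.norm_eq_abs]
    exact key t ht
  have hmain : Tendsto (fun t : ℝ => (Q t μ).coeff x - (Fintype.card G : ℝ)⁻¹)
      (nhdsWithin 1 (Set.Iio 1)) (nhds 0) := squeeze_zero_norm' hev hg0
  have := hmain.add (tendsto_const_nhds (x := (Fintype.card G : ℝ)⁻¹))
  simpa using this
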